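/- Let μη ∈ (1, 2) and define g₀(ρ) = −(2μη − 1)ρ − (2η − μη²)ρ² + η²ρ³. Then: (1) the derivative g₀' vanishes exactly at ρ = 1/η (a local minimum of g₀) and ρ = −(2ημ − 1)/(3η) (a local maximum of g₀); consequently g₀ is monotonically decreasing on [−(2ημ − 1)/(3η), 1/η] and sign-changing there, i.e. ρ·g₀(ρ) ≤ 0 for ρ in this interval. (2) The points ρ_± = (1 − μη ± √(μ²η² + 2μη − 3))/(2η) are 2-periodic points of g₀: g₀(ρ₋) = ρ₊ and g₀(ρ₊) = ρ₋, hence g₀(g₀(ρ_±)) = ρ_±. -/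

import Mathlib

/-!
STATEMENT 12: for μη ∈ (1,2) and g₀(ρ) = −(2μη−1)ρ − (2η−μη²)ρ² + η²ρ³:
(1) g₀' vanishes exactly at 1/η (local min) and −(2ημ−1)/(3η) (local max);
g₀ is monotonically decreasing and sign-changing on [−(2ημ−1)/(3η), 1/η];
(2) ρ_± = (1 − μη ± √(μ²η² + 2μη − 3))/(2η) form a 2-periodic orbit of g₀.
-/

theorem auxiliary_map_properties
    (μ η : ℝ) (hμ : 0 < μ) (hη : 0 < η)
    (hμη1 : 1 < μ * η) (hμη2 : μ * η < 2)
    (g0 : ℝ → ℝ)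
    (hg0 : ∀ ρ, g0 ρ = -(2 * μ * η - 1) * ρ - (2 * η - μ * η ^ 2) * ρ ^ 2 + η ^ 2 * ρ ^ 3) :
    (∀ ρ : ℝ, deriv g0 ρ = 0 ↔ (ρ = 1 / η ∨ ρ = -((2 * η * μ - 1) / (3 * η)))) ∧
    IsLocalMin g0 (1 / η) ∧
    IsLocalMax g0 (-((2 * η * μ - 1) / (3 * η))) ∧
    AntitoneOn g0 (Set.Icc (-((2 * η * μ - 1) / (3 * η))) (1 / η)) ∧
    (∀ ρ ∈ Set.Icc (-((2 * η * μ - 1) / (3 * η))) (1 / η), ρ * g0 ρ ≤ 0) ∧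
    g0 ((1 - μ * η - Real.sqrt (μ ^ 2 * η ^ 2 + 2 * μ * η - 3)) / (2 * η)) =
      (1 - μ * η + Real.sqrt (μ ^ 2 * η ^ 2 + 2 * μ * η - 3)) / (2 * η) ∧
    g0 ((1 - μ * η + Real.sqrt (μ ^ 2 * η ^ 2 + 2 * μ * η - 3)) / (2 * η)) =
      (1 - μ * η - Real.sqrt (μ ^ 2 * η ^ 2 + 2 * μ * η - 3)) / (2 * η) ∧
    g0 (g0 ((1 - μ * η + Real.sqrt (μ ^ 2 * η ^ 2 + 2 * μ * η - 3)) / (2 * η))) =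
      (1 - μ * η + Real.sqrt (μ ^ 2 * η ^ 2 + 2 * μ * η - 3)) / (2 * η) ∧
    g0 (g0 ((1 - μ * η - Real.sqrt (μ ^ 2 * η ^ 2 + 2 * μ * η - 3)) / (2 * η))) =
      (1 - μ * η - Real.sqrt (μ ^ 2 * η ^ 2 + 2 * μ * η - 3)) / (2 * η) := by
  have hηne : η ≠ 0 := ne_of_gt hη
  have hg : g0 = fun ρ => -(2 * μ * η - 1) * ρ - (2 * η - μ * η ^ 2) * ρ ^ 2 + η ^ 2 * ρ ^ 3 :=
    funext hg0
  -- derivative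
  have hder : ∀ ρ : ℝ, HasDerivAt g0 ((η * ρ - 1) * (3 * η * ρ + (2 * η * μ - 1))) ρ := by
    intro ρ
    rw [hg]
    have h := (((hasDerivAt_id ρ).const_mul (-(2 * μ * η - 1))).sub
        ((hasDerivAt_pow 2 ρ).const_mul (2 * η - μ * η ^ 2))).add
        ((hasDerivAt_pow 3 ρ).const_mul (η ^ 2))
    exact h.congr_deriv (by push_cast; ring)
  have hderiv : ∀ ρ : ℝ, deriv g0 ρ = (η * ρ - 1) * (3 * η * ρ + (2 * η * μ - 1)) :=
    fun ρ => (hder ρ).deriv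
  have hdiff : ∀ ρ : ℝ, DifferentiableAt ℝ g0 ρ := fun ρ => (hder ρ).differentiableAt
  have hcont : Continuous g0 := by
    rw [hg]
    exact ((continuous_const.mul continuous_id).sub
      (continuous_const.mul (continuous_pow 2))).add (continuous_const.mul (continuous_pow 3))
  have h0 : 0 < 2 * η * μ - 1 := by nlinarith
  have h3η : (0:ℝ) < 3 * η := by positivity
  have hr1r2 : -((2 * η * μ - 1) / (3 * η)) < 1 / η := by
    have h1 : 0 < (2 * η * μ - 1) / (3 * η) := div_pos h0 h3η
    have h2 : (0:ℝ) < 1 / η := by positivity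
    linarith
  -- sign of deriv on the middle interval
  have hmid : ∀ x ∈ Set.Ioo (-((2 * η * μ - 1) / (3 * η))) (1 / η), deriv g0 x ≤ 0 := by
    intro x hx
    rw [hderiv]
    have h1 : η * x - 1 < 0 := by
      have := hx.2
      rw [lt_div_iff₀ hη] at this
      nlinarith
    have h2 : 0 < 3 * η * x + (2 * η * μ - 1) := by
      have h' : -(2 * η * μ - 1) / (3 * η) < x := by rw [neg_div]; exact hx.1
      have := (div_lt_iff₀ h3η).mp h'
      nlinarith
    nlinarith
  -- deriv ≥ 0 to the right of 1/η
  have hright : ∀ x ∈ Set.Ioo (1 / η) (1 / η + 1), 0 ≤ deriv g0 x := by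
    intro x hx
    rw [hderiv]
    have h1 : 0 < η * x - 1 := by
      have := hx.1
      rw [div_lt_iff₀ hη] at this
      nlinarith
    have h2 : 0 < 3 * η * x + (2 * η * μ - 1) := by nlinarith
    nlinarith
  -- deriv ≥ 0 to the left of r1
  have hleft : ∀ x ∈ Set.Ioo (-((2 * η * μ - 1) / (3 * η)) - 1) (-((2 * η * μ - 1) / (3 * η))),
      0 ≤ deriv g0 x := by
    intro x hx
    rw [hderiv]
    have h2 : 3 * η * x + (2 * η * μ - 1) < 0 := by
      have h' : x < -(2 * η * μ - 1) / (3 * η) := by rw [neg_div]; exact hx.2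
      have := (lt_div_iff₀ h3η).mp h'
      nlinarith
    have h1 : η * x - 1 < 0 := by nlinarith
    nlinarith
  refine ⟨?_, ?_, ?_, ?_, ?_, ?_⟩
  · -- critical points
    intro ρ
    rw [hderiv, mul_eq_zero]
    constructor
    · rintro (h | h)
      · left
        rw [eq_div_iff hηne]
        linarith [h]
      · right
        rw [← neg_div, eq_div_iff (ne_of_gt h3η)]
        linarith [h]
    · rintro (rfl | rfl)
      · left; field_simp; ring
      · right; field_simp; ring
  · exact isLocalMin_of_deriv_Ioo hr1r2 (lt_add_one _) (hcont.continuousAt)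
      (fun x _ => (hdiff x).differentiableWithinAt) (fun x _ => (hdiff x).differentiableWithinAt)
      hmid hright
  · exact isLocalMax_of_deriv_Ioo (sub_one_lt _) hr1r2 (hcont.continuousAt)
      (fun x _ => (hdiff x).differentiableWithinAt) (fun x _ => (hdiff x).differentiableWithinAt)
      hleft hmid
  · exact antitoneOn_of_deriv_nonpos (convex_Icc _ _) hcont.continuousOn
      (fun x _ => (hdiff x).differentiableWithinAt) (by rw [interior_Icc]; exact hmid)
  · -- sign change
    rintro ρ ⟨hl, hr⟩
    rw [hg0]
    have hA : 0 ≤ 3 * η * ρ + (2 * η * μ - 1) := by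
      have h' : -(2 * η * μ - 1) / (3 * η) ≤ ρ := by rw [neg_div]; exact hl
      have := (div_le_iff₀ h3η).mp h'
      nlinarith
    have hB : η * ρ ≤ 1 := by
      have := (le_div_iff₀ hη).mp hr
      nlinarith
    have hh : η ^ 2 * ρ ^ 2 - (2 * η - μ * η ^ 2) * ρ - (2 * μ * η - 1) ≤ 0 := by
      nlinarith [mul_nonneg hA (sub_nonneg.mpr hB), sq_nonneg ρ, sq_nonneg (η * ρ)]
    have key : ρ * (-(2 * μ * η - 1) * ρ - (2 * η - μ * η ^ 2) * ρ ^ 2 + η ^ 2 * ρ ^ 3)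
        = ρ ^ 2 * (η ^ 2 * ρ ^ 2 - (2 * η - μ * η ^ 2) * ρ - (2 * μ * η - 1)) := by ring
    rw [key]
    exact mul_nonpos_of_nonneg_of_nonpos (sq_nonneg ρ) hh
  · -- periodic points
    have hDnn : 0 ≤ μ ^ 2 * η ^ 2 + 2 * μ * η - 3 := by nlinarith
    have hs : Real.sqrt (μ ^ 2 * η ^ 2 + 2 * μ * η - 3) ^ 2 = μ ^ 2 * η ^ 2 + 2 * μ * η - 3 :=
      Real.sq_sqrt hDnn
    set s := Real.sqrt (μ ^ 2 * η ^ 2 + 2 * μ * η - 3) with hsdef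
    have main : ∀ t : ℝ, t ^ 2 = μ ^ 2 * η ^ 2 + 2 * μ * η - 3 →
        g0 ((1 - μ * η - t) / (2 * η)) = (1 - μ * η + t) / (2 * η) := by
      intro t ht
      rw [hg0]
      field_simp
      ring_nf
      linear_combination (-t - 1 - μ * η) * ht
    have hminus := main s hs
    have hplus : g0 ((1 - μ * η + s) / (2 * η)) = (1 - μ * η - s) / (2 * η) := by
      have := main (-s) (by rw [neg_pow]; simpa using hs)
      rw [sub_neg_eq_add] at this
      rw [this]
      ring_nf
    exact ⟨hminus, hplus, by rw [hplus, hminus], by rw [hminus, hplus]⟩
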